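/- If X is a regular space with a dense subset E of cardinality at most 2^ω, and Bob has a winning strategy in the long tightness game G_1^{ω₁}(Ω_p, Ω_p) for some point p ∈ X, then the character of p in X is at most 2^ω (p has a neighbourhood base of cardinality at most 2^ω). -/

import Mathlib

universe u v

open Topology

/-- A strategy for Bob in the tightness game `G_1^κ(Ω_p, Ω_p)`: at inning `ξ < κ`, given the
history of Alice's previous moves and Alice's current set `A` (with `p ∈ closure A`),
Bob picks a point of `A`. -/
structure BobStratOne (X : Type u) [TopologicalSpace X] (p : X) (κ : Ordinal.{v}) where
  move : ∀ ξ : Ordinal.{v}, ξ < κ → (∀ α : Ordinal.{v}, α < ξ → Set X) → Set X → X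
  mem : ∀ ξ hξ hist A, p ∈ closure A → move ξ hξ hist A ∈ A

/-- The strategy is winning: for every play by Alice of sets having `p` in their closure,
the set of Bob's chosen points has `p` in its closure. -/
def BobStratOne.Winning {X : Type u} [TopologicalSpace X] {p : X} {κ : Ordinal.{v}}
    (S : BobStratOne X p κ) : Prop :=
  ∀ f : ∀ ξ : Ordinal.{v}, ξ < κ → Set X, (∀ ξ hξ, p ∈ closure (f ξ hξ)) →
    p ∈ closure {x | ∃ (ξ : Ordinal.{v}) (hξ : ξ < κ),
      S.move ξ hξ (fun α hα => f α (hα.trans hξ)) (f ξ hξ) = x}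

section Aux
open scoped Classical

variable {X : Type u} [TopologicalSpace X] {p : X}

/-- Alice's move at inning `α`, given the total target function `s` (targets below `α`
determine the history; `s α` is the current target). -/
noncomputable def auxMv (S : BobStratOne.{u, u} X p (Cardinal.aleph 1).ord) :
    Ordinal.{u} → (Ordinal.{u} → X) → X → Set X :=
  WellFounded.fix Ordinal.lt_wf (fun α IH s x =>
    if hα : α < (Cardinal.aleph 1).ord then
      if hx : ∃ B : Set X, p ∈ closure B ∧
          S.move α hα (fun β hβ => IH β hβ s (s β)) B = x then
        hx.choose
      else {p}
    else {p})

lemma auxMv_eq (S : BobStratOne.{u, u} X p (Cardinal.aleph 1).ord)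
    (α : Ordinal.{u}) (s : Ordinal.{u} → X) (x : X) :
    auxMv S α s x =
      if hα : α < (Cardinal.aleph 1).ord then
        if hx : ∃ B : Set X, p ∈ closure B ∧
            S.move α hα (fun β hβ => auxMv S β s (s β)) B = x then
          hx.choose
        else {p}
      else {p} := by
  conv_lhs => rw [auxMv, WellFounded.fix_eq]
  rfl

lemma p_mem_closure_auxMv (S : BobStratOne.{u, u} X p (Cardinal.aleph 1).ord)
    (α : Ordinal.{u}) (s : Ordinal.{u} → X) (x : X) :
    p ∈ closure (auxMv S α s x) := by
  rw [auxMv_eq]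
  split
  · split
    · next h => exact h.choose_spec.1
    · exact subset_closure rfl
  · exact subset_closure rfl

/-- The set of "realizable" targets in `E` at inning `α` with history determined by `s`. -/
def auxR (S : BobStratOne.{u, u} X p (Cardinal.aleph 1).ord) (E : Set X)
    (α : Ordinal.{u}) (s : Ordinal.{u} → X) : Set X :=
  if hα : α < (Cardinal.aleph 1).ord then
    {x | x ∈ E ∧ ∃ B : Set X, p ∈ closure B ∧
      S.move α hα (fun β hβ => auxMv S β s (s β)) B = x}
  else ∅

lemma auxR_subset (S : BobStratOne.{u, u} X p (Cardinal.aleph 1).ord) (E : Set X)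
    (α : Ordinal.{u}) (s : Ordinal.{u} → X) : auxR S E α s ⊆ E := by
  unfold auxR; split_ifs with h
  · exact fun x hx => hx.1
  · exact fun x hx => hx.elim

lemma auxMv_spec (S : BobStratOne.{u, u} X p (Cardinal.aleph 1).ord) (E : Set X)
    (α : Ordinal.{u}) (hα : α < (Cardinal.aleph 1).ord) (s : Ordinal.{u} → X) (x : X)
    (hx : x ∈ auxR S E α s) :
    S.move α hα (fun β hβ => auxMv S β s (s β)) (auxMv S α s x) = x := by
  rw [auxR, dif_pos hα] at hx
  rw [auxMv_eq, dif_pos hα, dif_pos hx.2]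
  exact hx.2.choose_spec.2

lemma auxMv_congr (S : BobStratOne.{u, u} X p (Cardinal.aleph 1).ord) :
    ∀ (α : Ordinal.{u}) (s s' : Ordinal.{u} → X), (∀ β < α, s β = s' β) →
      ∀ x, auxMv S α s x = auxMv S α s' x := by
  intro α
  induction α using Ordinal.induction with
  | h α IH =>
    intro s s' hss x
    have hh : (fun β (hβ : β < α) => auxMv S β s (s β))
        = fun β (hβ : β < α) => auxMv S β s' (s' β) := by
      funext β hβ
      rw [IH β hβ s s' (fun γ hγ => hss γ (hγ.trans hβ)) (s β), hss β hβ]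
    rw [auxMv_eq, auxMv_eq, hh]

lemma auxR_congr (S : BobStratOne.{u, u} X p (Cardinal.aleph 1).ord) (E : Set X)
    (α : Ordinal.{u}) (s s' : Ordinal.{u} → X) (hss : ∀ β < α, s β = s' β) :
    auxR S E α s = auxR S E α s' := by
  have hh : (fun β (hβ : β < α) => auxMv S β s (s β))
      = fun β (hβ : β < α) => auxMv S β s' (s' β) := by
    funext β hβ
    rw [auxMv_congr S β s s' (fun γ hγ => hss γ (hγ.trans hβ)) (s β), hss β hβ]
  unfold auxR
  rw [hh]

/-- The canonical neighbourhood of `p` associated to a history. -/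
def auxN (S : BobStratOne.{u, u} X p (Cardinal.aleph 1).ord) (E : Set X)
    (α : Ordinal.{u}) (s : Ordinal.{u} → X) : Set X :=
  (closure (E \ auxR S E α s))ᶜ

lemma auxN_congr (S : BobStratOne.{u, u} X p (Cardinal.aleph 1).ord) (E : Set X)
    (α : Ordinal.{u}) (s s' : Ordinal.{u} → X) (hss : ∀ β < α, s β = s' β) :
    auxN S E α s = auxN S E α s' := by
  unfold auxN
  rw [auxR_congr S E α s s' hss]

lemma p_mem_auxN (S : BobStratOne.{u, u} X p (Cardinal.aleph 1).ord) (E : Set X)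
    (α : Ordinal.{u}) (hα : α < (Cardinal.aleph 1).ord) (s : Ordinal.{u} → X) :
    p ∈ auxN S E α s := by
  intro hp
  have hp' : p ∈ closure (E \ auxR S E α s) := hp
  have hmem := S.mem α hα (fun β hβ => auxMv S β s (s β)) (E \ auxR S E α s) hp'
  have hset : auxR S E α s = {x | x ∈ E ∧ ∃ B : Set X, p ∈ closure B ∧
      S.move α hα (fun β hβ => auxMv S β s (s β)) B = x} := by
    rw [auxR, dif_pos hα]
  rw [hset] at hp' hmem
  exact hmem.2 ⟨hmem.1, ⟨_, hp', rfl⟩⟩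

end Aux

section Aux2

variable {X : Type u} [TopologicalSpace X] {p : X}

open scoped Classical

/-- The targets defeating the strategy, chosen by transfinite recursion. -/
noncomputable def auxT (S : BobStratOne.{u, u} X p (Cardinal.aleph 1).ord) (E V : Set X)
    (e₀ : ↥E)
    (hyp : ∀ (α : Ordinal.{u}), α < (Cardinal.aleph 1).ord → ∀ s : Ordinal.{u} → X,
      (∀ β < α, s β ∈ E) → ∃ x, x ∈ auxR S E α s ∧ x ∉ V) : Ordinal.{u} → ↥E :=
  WellFounded.fix Ordinal.lt_wf (fun α IH =>
    if hα : α < (Cardinal.aleph 1).ord then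
      have h := hyp α hα (fun β => if hβ : β < α then (IH β hβ : X) else (e₀ : X))
        (fun β hβ => by simpa only [dif_pos hβ] using (IH β hβ).2)
      ⟨h.choose, auxR_subset S E α _ h.choose_spec.1⟩
    else e₀)

lemma auxT_spec (S : BobStratOne.{u, u} X p (Cardinal.aleph 1).ord) (E V : Set X)
    (e₀ : ↥E)
    (hyp : ∀ (α : Ordinal.{u}), α < (Cardinal.aleph 1).ord → ∀ s : Ordinal.{u} → X,
      (∀ β < α, s β ∈ E) → ∃ x, x ∈ auxR S E α s ∧ x ∉ V)
    (α : Ordinal.{u}) (hα : α < (Cardinal.aleph 1).ord) :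
    ((auxT S E V e₀ hyp α : X) ∈ auxR S E α (fun β => (auxT S E V e₀ hyp β : X)))
      ∧ ((auxT S E V e₀ hyp α : X) ∉ V) := by
  have heq : auxT S E V e₀ hyp α =
      (if hα : α < (Cardinal.aleph 1).ord then
        have h := hyp α hα (fun β => if hβ : β < α then (auxT S E V e₀ hyp β : X) else (e₀ : X))
          (fun β hβ => by simpa only [dif_pos hβ] using (auxT S E V e₀ hyp β).2)
        (⟨h.choose, auxR_subset S E α _ h.choose_spec.1⟩ : ↥E)
      else e₀) := by
    conv_lhs => rw [auxT, WellFounded.fix_eq]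
    rfl
  rw [heq, dif_pos hα]
  have key := (hyp α hα (fun β => if hβ : β < α then (auxT S E V e₀ hyp β : X) else (e₀ : X))
    (fun β hβ => by simpa only [dif_pos hβ] using (auxT S E V e₀ hyp β).2)).choose_spec
  constructor
  · have hcongr := auxR_congr S E α
      (fun β => if hβ : β < α then (auxT S E V e₀ hyp β : X) else (e₀ : X))
      (fun β => (auxT S E V e₀ hyp β : X)) (fun β hβ => dif_pos hβ)
    rw [← hcongr]
    exact key.1
  · exact key.2

end Aux2


/-- If `X` is regular with a dense subset `E` of cardinality at most `2^ω` and Bob has a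
winning strategy in `G_1^{ω₁}(Ω_p, Ω_p)`, then the character of `p` in `X` is at most `2^ω`:
`p` has a neighbourhood base of cardinality at most `2^ω`. -/
theorem character_le_continuum {X : Type u} [TopologicalSpace X] [RegularSpace X] {p : X}
    (E : Set X) (hE : Dense E) (hEcard : Cardinal.mk E ≤ Cardinal.continuum.{u})
    (S : BobStratOne.{u, u} X p (Cardinal.aleph 1).ord) (hS : S.Winning) :
    ∃ B : Set (Set X), Cardinal.mk B ≤ Cardinal.continuum.{u} ∧
      (∀ V ∈ B, V ∈ 𝓝 p) ∧ ∀ U ∈ 𝓝 p, ∃ V ∈ B, V ⊆ U := by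

  classical
  have hne : Nonempty X := ⟨p⟩
  obtain ⟨e0, he0⟩ := hE.nonempty
  refine ⟨{Vs | ∃ (α : Ordinal.{u}) (_ : α < (Cardinal.aleph 1).ord) (s : Ordinal.{u} → X),
      (∀ β < α, s β ∈ E) ∧ Vs = auxN S E α s}, ?_, ?_, ?_⟩
  · -- cardinality bound
    set iso := (Ordinal.ToType.mk (o := (Cardinal.aleph 1).ord)) with hiso
    set F : (Σ w : ((Cardinal.aleph 1).ord).ToType, ({v : ((Cardinal.aleph 1).ord).ToType // v < w} → ↥E)) → Set X := fun z =>
      auxN S E ((iso.symm z.1 : Set.Iio ((Cardinal.aleph 1).ord)) : Ordinal.{u})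
        (fun o => if h : ∃ v : {v : ((Cardinal.aleph 1).ord).ToType // v < z.1},
            ((iso.symm (v : ((Cardinal.aleph 1).ord).ToType) : Set.Iio ((Cardinal.aleph 1).ord)) : Ordinal.{u}) = o
          then ((z.2 h.choose : ↥E) : X) else e0) with hF
    have hsub : {Vs | ∃ (α : Ordinal.{u}) (_ : α < (Cardinal.aleph 1).ord)
        (s : Ordinal.{u} → X), (∀ β < α, s β ∈ E) ∧ Vs = auxN S E α s} ⊆ Set.range F := by
      rintro Vs ⟨α, hα, s, hsE, rfl⟩
      set w := iso ⟨α, hα⟩ with hw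
      have hsymm : iso.symm w = ⟨α, hα⟩ := OrderIso.symm_apply_apply iso ⟨α, hα⟩
      have hg : ∀ v : {v : ((Cardinal.aleph 1).ord).ToType // v < w},
          ((iso.symm (v : ((Cardinal.aleph 1).ord).ToType) : Set.Iio ((Cardinal.aleph 1).ord)) : Ordinal.{u}) < α := by
        intro v
        have h1 : iso.symm (v : ((Cardinal.aleph 1).ord).ToType) < iso.symm w := iso.symm.lt_iff_lt.2 v.2
        rw [hsymm] at h1
        exact h1
      refine ⟨⟨w, fun v => ⟨s ((iso.symm (v : ((Cardinal.aleph 1).ord).ToType) : Set.Iio ((Cardinal.aleph 1).ord)) :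
        Ordinal.{u}), hsE _ (hg v)⟩⟩, ?_⟩
      show auxN S E ((iso.symm w : Set.Iio ((Cardinal.aleph 1).ord)) : Ordinal.{u}) _ = _
      have h1 : ((iso.symm w : Set.Iio ((Cardinal.aleph 1).ord)) : Ordinal.{u}) = α := by
        rw [hsymm]
      rw [h1]
      refine auxN_congr S E α _ s ?_
      intro o ho
      have hex : ∃ v : {v : ((Cardinal.aleph 1).ord).ToType // v < w},
          ((iso.symm (v : ((Cardinal.aleph 1).ord).ToType) : Set.Iio ((Cardinal.aleph 1).ord)) : Ordinal.{u}) = o := by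
        refine ⟨⟨iso ⟨o, ho.trans hα⟩, iso.lt_iff_lt.2 (Subtype.mk_lt_mk.2 ho)⟩, ?_⟩
        rw [OrderIso.symm_apply_apply]
      rw [dif_pos hex]
      show s ((iso.symm (hex.choose : ((Cardinal.aleph 1).ord).ToType) : Set.Iio ((Cardinal.aleph 1).ord)) : Ordinal.{u}) = s o
      rw [hex.choose_spec]
    have hWcard : Cardinal.mk ((Cardinal.aleph 1).ord).ToType ≤ Cardinal.continuum.{u} := by
      rw [Cardinal.mk_toType, Cardinal.card_ord]
      exact Cardinal.aleph_one_le_continuum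
    have hfiber : ∀ w : ((Cardinal.aleph 1).ord).ToType, Cardinal.mk ({v : ((Cardinal.aleph 1).ord).ToType // v < w} → ↥E) ≤ Cardinal.continuum.{u} := by
      intro w
      letI : IsWellOrder ((Cardinal.aleph 1).ord).ToType (· < ·) := isWellOrder_lt
      rw [← Cardinal.power_def]
      have h2 : Cardinal.mk {v : ((Cardinal.aleph 1).ord).ToType // v < w} ≤ Cardinal.aleph0 := by
        have h3 : Cardinal.mk {v : ((Cardinal.aleph 1).ord).ToType // v < w}
            = (Ordinal.typein ((· < ·) : ((Cardinal.aleph 1).ord).ToType → ((Cardinal.aleph 1).ord).ToType → Prop) w).card := (Ordinal.card_typein w).symm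
        have h4 : Ordinal.typein ((· < ·) : ((Cardinal.aleph 1).ord).ToType → ((Cardinal.aleph 1).ord).ToType → Prop) w < (Cardinal.aleph 1).ord := by
          have h5 := Ordinal.typein_lt_type ((· < ·) : ((Cardinal.aleph 1).ord).ToType → ((Cardinal.aleph 1).ord).ToType → Prop) w
          rwa [Ordinal.type_toType] at h5
        have h6 := Cardinal.lt_ord.1 h4
        exact h3.trans_le (Order.lt_succ_iff.1 (lt_of_lt_of_eq h6 Cardinal.succ_aleph0.symm))
      calc Cardinal.mk ↥E ^ Cardinal.mk {v : ((Cardinal.aleph 1).ord).ToType // v < w}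
          ≤ Cardinal.continuum.{u} ^ Cardinal.mk {v : ((Cardinal.aleph 1).ord).ToType // v < w} :=
            Cardinal.power_le_power_right hEcard
        _ ≤ Cardinal.continuum.{u} ^ Cardinal.aleph0 :=
            Cardinal.power_le_power_left Cardinal.continuum_ne_zero h2
        _ = Cardinal.continuum.{u} := by
            rw [← Cardinal.two_power_aleph0, ← Cardinal.power_mul, Cardinal.aleph0_mul_aleph0]
    calc Cardinal.mk ↥{Vs | ∃ (α : Ordinal.{u}) (_ : α < (Cardinal.aleph 1).ord)
          (s : Ordinal.{u} → X), (∀ β < α, s β ∈ E) ∧ Vs = auxN S E α s}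
        ≤ Cardinal.mk ↥(Set.range F) := Cardinal.mk_le_mk_of_subset hsub
      _ ≤ Cardinal.mk (Σ w : ((Cardinal.aleph 1).ord).ToType, ({v : ((Cardinal.aleph 1).ord).ToType // v < w} → ↥E)) := Cardinal.mk_range_le
      _ = Cardinal.sum (fun w : ((Cardinal.aleph 1).ord).ToType => Cardinal.mk ({v : ((Cardinal.aleph 1).ord).ToType // v < w} → ↥E)) :=
          Cardinal.mk_sigma _
      _ ≤ Cardinal.sum (fun _ : ((Cardinal.aleph 1).ord).ToType => Cardinal.continuum.{u}) :=
          Cardinal.sum_le_sum _ _ hfiber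
      _ = Cardinal.mk ((Cardinal.aleph 1).ord).ToType * Cardinal.continuum.{u} := Cardinal.sum_const' _ _
      _ ≤ Cardinal.continuum.{u} * Cardinal.continuum.{u} := mul_le_mul_left hWcard _
      _ = Cardinal.continuum.{u} := Cardinal.mul_eq_self Cardinal.aleph0_le_continuum
  · -- members are neighbourhoods
    rintro Vs ⟨α, hα, s, hsE, rfl⟩
    exact (isClosed_closure.isOpen_compl).mem_nhds (p_mem_auxN S E α hα s)
  · -- base property
    intro U hU
    obtain ⟨C, ⟨hCnhds, hCclosed⟩, hCU⟩ := (closed_nhds_basis p).mem_iff.1 hU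
    set V := interior C with hVdef
    have hVopen : IsOpen V := isOpen_interior
    have hpV : p ∈ V := mem_interior_iff_mem_nhds.2 hCnhds
    have hclVU : closure V ⊆ U := (closure_minimal interior_subset hCclosed).trans hCU
    by_contra hcon
    push_neg at hcon
    have hyp : ∀ (α : Ordinal.{u}), α < (Cardinal.aleph 1).ord → ∀ s : Ordinal.{u} → X,
        (∀ β < α, s β ∈ E) → ∃ x, x ∈ auxR S E α s ∧ x ∉ V := by
      intro α hα s hsE
      by_contra hno
      push_neg at hno
      have hRV : auxR S E α s ⊆ V := fun x hx => hno x hx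
      have hNU : auxN S E α s ⊆ U := by
        have h1 : (closure V)ᶜ ⊆ closure ((closure V)ᶜ ∩ E) :=
          hE.open_subset_closure_inter isClosed_closure.isOpen_compl
        have h2 : (closure V)ᶜ ∩ E ⊆ E \ auxR S E α s := by
          rintro x ⟨hx1, hx2⟩
          exact ⟨hx2, fun hxR => hx1 (subset_closure (hRV hxR))⟩
        intro x hx
        by_contra hxU
        have hxV : x ∈ (closure V)ᶜ := fun hxclV => hxU (hclVU hxclV)
        exact hx ((closure_mono h2) (h1 hxV))
      exact hcon (auxN S E α s) ⟨α, hα, s, hsE, rfl⟩ hNU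
    have hwin := hS (fun ξ _ => auxMv S ξ (fun β => (auxT S E V ⟨e0, he0⟩ hyp β : X))
        ((auxT S E V ⟨e0, he0⟩ hyp ξ : X)))
      (fun ξ _ => p_mem_closure_auxMv S ξ _ _)
    have hsubV : {x | ∃ (ξ : Ordinal.{u}) (hξ : ξ < (Cardinal.aleph 1).ord),
        S.move ξ hξ (fun α _ => auxMv S α (fun β => (auxT S E V ⟨e0, he0⟩ hyp β : X))
          ((auxT S E V ⟨e0, he0⟩ hyp α : X)))
          (auxMv S ξ (fun β => (auxT S E V ⟨e0, he0⟩ hyp β : X))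
            ((auxT S E V ⟨e0, he0⟩ hyp ξ : X))) = x} ⊆ Vᶜ := by
      rintro x ⟨ξ, hξ, hxeq⟩
      have hspec := auxT_spec S E V ⟨e0, he0⟩ hyp ξ hξ
      have hmv := auxMv_spec S E ξ hξ (fun β => (auxT S E V ⟨e0, he0⟩ hyp β : X))
        ((auxT S E V ⟨e0, he0⟩ hyp ξ : X)) hspec.1
      rw [hmv] at hxeq
      exact hxeq ▸ hspec.2
    have hpc : p ∈ Vᶜ := closure_minimal hsubV hVopen.isClosed_compl hwin
    exact hpc hpV
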